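/- Let H be a finite set of integral vectors in ℤ^n such that every integral vector in the cone generated by H can be written as a nonnegative integral combination of vectors in H (i.e., H is an integral generating set for its cone), and suppose the cone generated by H is pointed (contains no line). Then H contains a linearly independent subset B such that every integral vector in the linear span of H is an integral linear combination of vectors in B. -/

import Mathlib

open scoped Classical

noncomputable section

/-- The cone generated by a finite set of integral vectors, viewed in `ℝ^n`. -/
def intCone {n : ℕ} (H : Finset (Fin n → ℤ)) : Set (Fin n → ℝ) :=
  {x | ∃ c : (Fin n → ℤ) → ℝ, (∀ h, 0 ≤ c h) ∧
    x = ∑ h ∈ H, c h • (fun i => (h i : ℝ))}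

namespace IGS

variable {n : ℕ}

def iota (x : Fin n → ℤ) : Fin n → ℝ := fun i => (x i : ℝ)

lemma iota_inj {x y : Fin n → ℤ} (h : iota x = iota y) : x = y := by
  funext i
  have := congrFun h i
  simpa [iota] using this

@[simp] lemma iota_zero : iota (0 : Fin n → ℤ) = 0 := by
  funext i; simp [iota]

lemma iota_eq_zero {x : Fin n → ℤ} (h : iota x = 0) : x = 0 :=
  iota_inj (by simp [h])

lemma iota_add (x y : Fin n → ℤ) : iota (x + y) = iota x + iota y := by
  funext i; simp [iota]

lemma iota_sub (x y : Fin n → ℤ) : iota (x - y) = iota x - iota y := by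
  funext i; simp [iota]

lemma iota_neg (x : Fin n → ℤ) : iota (-x) = - iota x := by
  funext i; simp [iota]

lemma iota_zsmul (m : ℤ) (x : Fin n → ℤ) : iota (m • x) = (m : ℝ) • iota x := by
  funext i; simp [iota]

lemma iota_nsmul (m : ℕ) (x : Fin n → ℤ) : iota (m • x) = (m : ℝ) • iota x := by
  funext i; simp [iota]

lemma iota_sum_nsmul {α : Type*} (F : Finset α) (c : α → ℕ) (v : α → Fin n → ℤ) :
    iota (∑ h ∈ F, c h • v h) = ∑ h ∈ F, (c h : ℝ) • iota (v h) := by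
  funext i
  simp only [iota, Finset.sum_apply, Pi.smul_apply, smul_eq_mul]
  push_cast [Pi.smul_apply]
  simp [nsmul_eq_mul]

lemma iota_sum_zsmul {α : Type*} (F : Finset α) (c : α → ℤ) (v : α → Fin n → ℤ) :
    iota (∑ h ∈ F, c h • v h) = ∑ h ∈ F, (c h : ℝ) • iota (v h) := by
  funext i
  simp only [iota, Finset.sum_apply, Pi.smul_apply, smul_eq_mul]
  push_cast [Pi.smul_apply]
  simp [zsmul_eq_mul]

lemma mem_intCone {H : Finset (Fin n → ℤ)} {x : Fin n → ℝ} :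
    x ∈ intCone H ↔ ∃ c : (Fin n → ℤ) → ℝ, (∀ h, 0 ≤ c h) ∧
      x = ∑ h ∈ H, c h • iota h := Iff.rfl

lemma zero_mem_intCone (H : Finset (Fin n → ℤ)) : (0 : Fin n → ℝ) ∈ intCone H :=
  ⟨0, fun _ => le_rfl, by simp⟩

lemma mem_intCone_of_mem {H : Finset (Fin n → ℤ)} {h : Fin n → ℤ} (hh : h ∈ H) :
    iota h ∈ intCone H := by
  refine ⟨fun g => if g = h then 1 else 0, fun g => by positivity, ?_⟩
  have : ∀ g ∈ H, (if g = h then (1:ℝ) else 0) • (fun i => ((g i : ℝ))) =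
      if g = h then iota h else 0 := by
    intro g _
    by_cases hg : g = h <;> simp [hg] <;> rfl
  rw [Finset.sum_congr rfl this, Finset.sum_ite_eq' H h (fun _ => iota h)]
  simp [hh]

lemma add_mem_intCone {H : Finset (Fin n → ℤ)} {x y : Fin n → ℝ}
    (hx : x ∈ intCone H) (hy : y ∈ intCone H) : x + y ∈ intCone H := by
  obtain ⟨c, hc, rfl⟩ := hx
  obtain ⟨d, hd, rfl⟩ := hy
  exact ⟨c + d, fun h => add_nonneg (hc h) (hd h), by
    rw [← Finset.sum_add_distrib]
    exact Finset.sum_congr rfl fun h _ => by simp [add_smul]⟩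

lemma smul_mem_intCone {H : Finset (Fin n → ℤ)} {x : Fin n → ℝ} {t : ℝ}
    (ht : 0 ≤ t) (hx : x ∈ intCone H) : t • x ∈ intCone H := by
  obtain ⟨c, hc, rfl⟩ := hx
  exact ⟨fun h => t * c h, fun h => mul_nonneg ht (hc h), by
    rw [Finset.smul_sum]
    exact Finset.sum_congr rfl fun h _ => by rw [smul_smul]⟩

lemma sum_mem_intCone {H : Finset (Fin n → ℤ)} {α : Type*} (F : Finset α)
    (u : α → Fin n → ℝ) (hu : ∀ a ∈ F, u a ∈ intCone H) :
    (∑ a ∈ F, u a) ∈ intCone H := by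
  classical
  induction F using Finset.induction_on with
  | empty => simpa using zero_mem_intCone H
  | insert a F hx ih =>
      rw [Finset.sum_insert hx]
      exact add_mem_intCone (hu a (Finset.mem_insert_self a F))
        (ih fun b hb => hu b (Finset.mem_insert_of_mem hb))

lemma intCone_mono {S H : Finset (Fin n → ℤ)} (hSH : S ⊆ H) :
    intCone S ⊆ intCone H := by
  rintro x ⟨c, hc, rfl⟩
  exact sum_mem_intCone S _ fun h hh =>
    smul_mem_intCone (hc h) (mem_intCone_of_mem (hSH hh))


lemma pointed_pair {H : Finset (Fin n → ℤ)}
    (hpt : ∀ v : Fin n → ℝ, v ∈ intCone H → -v ∈ intCone H → v = 0)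
    {u v : Fin n → ℝ} (hu : u ∈ intCone H) (hv : v ∈ intCone H)
    (huv : u + v = 0) : u = 0 := by
  have hv' : -u = v := by
    rw [neg_eq_iff_add_eq_zero]; exact huv
  exact hpt u hu (hv' ▸ hv)

lemma exists_extreme {H : Finset (Fin n → ℤ)}
    (hpt : ∀ v : Fin n → ℝ, v ∈ intCone H → -v ∈ intCone H → v = 0)
    {h0 : Fin n → ℤ} (h0H : h0 ∈ H) (h0ne : iota h0 ≠ 0) :
    ∃ e ∈ H, iota e ≠ 0 ∧ ∀ u v : Fin n → ℝ, u ∈ intCone H → v ∈ intCone H →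
      (∃ t : ℝ, u + v = t • iota e) →
      (∃ α : ℝ, 0 ≤ α ∧ u = α • iota e) := by
  classical
  obtain ⟨S, hS, hmin⟩ := Finset.exists_min_image
    (H.powerset.filter (fun S => intCone S = intCone H)) Finset.card
    ⟨H, Finset.mem_filter.mpr ⟨Finset.mem_powerset_self H, rfl⟩⟩
  rw [Finset.mem_filter, Finset.mem_powerset] at hS
  obtain ⟨hSH, hSc⟩ := hS
  have hES : ∃ e ∈ S, iota e ≠ 0 := by
    by_contra hcon
    push_neg at hcon
    have hmem : iota h0 ∈ intCone S := by rw [hSc]; exact mem_intCone_of_mem h0H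
    obtain ⟨c, hc, hrep⟩ := mem_intCone.mp hmem
    apply h0ne
    rw [hrep]
    exact Finset.sum_eq_zero fun h hh => by rw [hcon h hh, smul_zero]
  obtain ⟨e, heS, hene⟩ := hES
  refine ⟨e, hSH heS, hene, ?_⟩
  rintro u v hu hv ⟨t, huv⟩
  have huS : u ∈ intCone S := by rw [hSc]; exact hu
  have hvS : v ∈ intCone S := by rw [hSc]; exact hv
  obtain ⟨a, ha, hua⟩ := mem_intCone.mp huS
  obtain ⟨b, hb, hvb⟩ := mem_intCone.mp hvS
  by_cases ht : t ≤ 0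
  · have h1 : u + v ∈ intCone H := add_mem_intCone hu hv
    have h2 : -(u + v) ∈ intCone H := by
      rw [huv, ← neg_smul]
      exact smul_mem_intCone (by linarith) (mem_intCone_of_mem (hSH heS))
    have h0' : u + v = 0 := hpt _ h1 h2
    exact ⟨0, le_rfl, by simpa using pointed_pair hpt hu hv h0'⟩
  · push_neg at ht
    set A := a e + b e with hA
    have hsum : u + v = ∑ h ∈ S, (a h + b h) • iota h := by
      rw [hua, hvb, ← Finset.sum_add_distrib]
      exact Finset.sum_congr rfl fun h _ => (add_smul _ _ _).symm
    have hsplit : ∑ h ∈ S, (a h + b h) • iota h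
        = A • iota e + ∑ h ∈ S.erase e, (a h + b h) • iota h :=
      (Finset.add_sum_erase _ _ heS).symm
    have key : ∑ h ∈ S.erase e, (a h + b h) • iota h = (t - A) • iota e := by
      have h1 : t • iota e = A • iota e + ∑ h ∈ S.erase e, (a h + b h) • iota h := by
        rw [← huv, hsum, hsplit]
      rw [sub_smul]
      rw [h1]
      abel
    have hw_mem : (∑ h ∈ S.erase e, (a h + b h) • iota h) ∈ intCone (S.erase e) :=
      mem_intCone.mpr ⟨fun h => a h + b h, fun h => add_nonneg (ha h) (hb h), rfl⟩
    by_cases hAt : A < t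
    · exfalso
      have he' : iota e ∈ intCone (S.erase e) := by
        have h2 : iota e = (t - A)⁻¹ • ∑ h ∈ S.erase e, (a h + b h) • iota h := by
          rw [key, smul_smul, inv_mul_cancel₀ (by linarith), one_smul]
        rw [h2]
        exact smul_mem_intCone (by
          have : (0:ℝ) < t - A := by linarith
          positivity) hw_mem
      have hEq : intCone (S.erase e) = intCone H := by
        refine Set.Subset.antisymm
          ((intCone_mono (Finset.erase_subset _ _)).trans (le_of_eq hSc)) ?_
        intro x hx
        rw [← hSc] at hx
        obtain ⟨d, hd, rfl⟩ := mem_intCone.mp hx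
        rw [← Finset.add_sum_erase _ _ heS]
        exact add_mem_intCone (smul_mem_intCone (hd e) he')
          (mem_intCone.mpr ⟨d, hd, rfl⟩)
      have h3 : S.card ≤ (S.erase e).card :=
        hmin _ (Finset.mem_filter.mpr
          ⟨Finset.mem_powerset.mpr ((Finset.erase_subset _ _).trans hSH), hEq⟩)
      have h4 : (S.erase e).card < S.card := Finset.card_erase_lt_of_mem heS
      omega
    · push_neg at hAt
      have hw0 : ∑ h ∈ S.erase e, (a h + b h) • iota h = 0 := by
        apply hpt
        · exact intCone_mono ((Finset.erase_subset _ _).trans hSH) hw_mem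
        · rw [key, ← neg_smul]
          have : -(t - A) = A - t := by ring
          rw [this]
          exact smul_mem_intCone (by linarith) (mem_intCone_of_mem (hSH heS))
      have hsplit2 : ∑ h ∈ S.erase e, (a h + b h) • iota h
          = (∑ h ∈ S.erase e, a h • iota h) + ∑ h ∈ S.erase e, b h • iota h := by
        rw [← Finset.sum_add_distrib]
        exact Finset.sum_congr rfl fun h _ => add_smul _ _ _
      have hu'0 : ∑ h ∈ S.erase e, a h • iota h = 0 := by
        apply pointed_pair hpt
          (intCone_mono ((Finset.erase_subset _ _).trans hSH)
            (mem_intCone.mpr ⟨a, ha, rfl⟩))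
          (intCone_mono ((Finset.erase_subset _ _).trans hSH)
            (mem_intCone.mpr ⟨b, hb, rfl⟩))
        rw [← hsplit2, hw0]
      refine ⟨a e, ha e, ?_⟩
      rw [hua, ← Finset.add_sum_erase _ _ heS, hu'0, add_zero]

/-- every summand of a cone-sum lying on the extreme ray lies on the ray -/
lemma sum_ray {H : Finset (Fin n → ℤ)} {e : Fin n → ℤ}
    (hext : ∀ u v : Fin n → ℝ, u ∈ intCone H → v ∈ intCone H →
      (∃ t : ℝ, u + v = t • iota e) → (∃ α : ℝ, 0 ≤ α ∧ u = α • iota e))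
    {α : Type*} (F : Finset α) (u : α → Fin n → ℝ)
    (hmem : ∀ x ∈ F, u x ∈ intCone H) (hsum : ∃ t : ℝ, ∑ x ∈ F, u x = t • iota e) :
    ∀ x ∈ F, ∃ a : ℝ, 0 ≤ a ∧ u x = a • iota e := by
  classical
  induction F using Finset.induction_on with
  | empty => intro x hx; exact absurd hx (Finset.notMem_empty x)
  | insert a F hx ih =>
      intro x hxF
      rw [Finset.sum_insert hx] at hsum
      have hmF : (∑ y ∈ F, u y) ∈ intCone H :=
        sum_mem_intCone F u fun y hy => hmem y (Finset.mem_insert_of_mem hy)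
      have hma : u a ∈ intCone H := hmem a (Finset.mem_insert_self a F)
      rcases Finset.mem_insert.mp hxF with rfl | hxF'
      · exact hext _ _ hma hmF hsum
      · obtain ⟨β, hβ0, hβ⟩ := hext _ _ hmF hma (by
          obtain ⟨t, ht⟩ := hsum; exact ⟨t, by rw [← ht]; abel⟩)
        exact ih (fun y hy => hmem y (Finset.mem_insert_of_mem hy)) ⟨β, hβ⟩ x hxF'

lemma exists_prim {H : Finset (Fin n → ℤ)}
    (hIGSC : ∀ x : Fin n → ℤ, (fun i => (x i : ℝ)) ∈ intCone H →
      ∃ c : (Fin n → ℤ) → ℕ, x = ∑ h ∈ H, c h • h)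
    {e : Fin n → ℤ} (heH : e ∈ H) (hene : iota e ≠ 0)
    (hext : ∀ u v : Fin n → ℝ, u ∈ intCone H → v ∈ intCone H →
      (∃ t : ℝ, u + v = t • iota e) → (∃ α : ℝ, 0 ≤ α ∧ u = α • iota e)) :
    ∃ p : Fin n → ℤ, p ∈ H ∧ (∃ tp : ℝ, 0 < tp ∧ iota p = tp • iota e) ∧
      (∀ g : Fin n → ℤ, (∃ t : ℝ, iota g = t • iota p) → ∃ k : ℤ, g = k • p) := by
  classical
  -- a coordinate where e is nonzero
  have he0 : e ≠ 0 := fun h => hene (by rw [h]; exact iota_zero)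
  obtain ⟨i, hi⟩ : ∃ i, e i ≠ 0 := by
    by_contra hcon
    push_neg at hcon
    exact he0 (funext hcon)
  -- Ray predicate
  set Ray : (Fin n → ℤ) → Prop := fun g => ∃ t : ℝ, 0 < t ∧ iota g = t • iota e
    with hRay
  have hray_i : ∀ g : Fin n → ℤ, ∀ t : ℝ, iota g = t • iota e → (g i : ℝ) = t * (e i : ℝ) := by
    intro g t hg
    have := congrFun hg i
    simpa [iota] using this
  have hrayne : ∀ g, Ray g → (g i : ℝ) ≠ 0 := by
    rintro g ⟨t, ht, hg⟩
    rw [hray_i g t hg]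
    have : ((e i : ℝ)) ≠ 0 := Int.cast_ne_zero.mpr hi
    positivity
  -- minimal natAbs on the ray at coordinate i
  set T : Set ℕ := {m | ∃ g, Ray g ∧ (g i).natAbs = m} with hT
  have hTne : ((e i).natAbs) ∈ T := ⟨e, ⟨1, one_pos, (one_smul _ _).symm⟩, rfl⟩
  obtain ⟨p, hpRay, hpm⟩ : ∃ p, Ray p ∧ (p i).natAbs = sInf T := Nat.sInf_mem ⟨_, hTne⟩
  have hmin : ∀ g, Ray g → (p i).natAbs ≤ (g i).natAbs := by
    intro g hg
    rw [hpm]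
    exact Nat.sInf_le ⟨g, hg, rfl⟩
  obtain ⟨tp, htp, hpe⟩ := hpRay
  have hpi : (p i : ℝ) ≠ 0 := hrayne p ⟨tp, htp, hpe⟩
  have hpine : p i ≠ 0 := fun h => hpi (by rw [h]; simp)
  have hpne : p ≠ 0 := fun h => hpine (by rw [h]; rfl)
  have hpabs : (0:ℝ) < |(p i : ℝ)| := abs_pos.mpr hpi
  -- the structure lemma on the ray, positive case
  have ray_step : ∀ g, Ray g → ∃ k : ℤ, 1 ≤ k ∧ g = k • p := by
    rintro g ⟨tg, htg, hge⟩
    set τ : ℝ := tg / tp with hτ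
    have hτpos : 0 < τ := div_pos htg htp
    have hgp : iota g = τ • iota p := by
      rw [hpe, smul_smul, hτ, div_mul_cancel₀ _ (ne_of_gt htp)]
      exact hge
    have hcoord : ∀ j, (g j : ℝ) = τ * (p j : ℝ) := by
      intro j
      have := congrFun hgp j
      simpa [iota] using this
    -- τ ≥ 1 by minimality
    have habs : |(g i : ℝ)| = τ * |(p i : ℝ)| := by
      rw [hcoord i, abs_mul, abs_of_pos hτpos]
    have hminabs : |(p i : ℝ)| ≤ |(g i : ℝ)| := by
      have h1 := hmin g ⟨tg, htg, hge⟩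
      have : ((p i).natAbs : ℝ) ≤ ((g i).natAbs : ℝ) := by exact_mod_cast h1
      simpa [Nat.cast_natAbs, Int.cast_abs] using this
    have hτ1 : 1 ≤ τ := by
      rw [habs] at hminabs
      nlinarith
    set k : ℤ := ⌊τ⌋ with hk
    have hk1 : 1 ≤ k := by
      rw [hk]
      exact Int.le_floor.mpr (by exact_mod_cast hτ1)
    have hr0 : (0:ℝ) ≤ τ - k := by
      have := Int.floor_le τ
      simp only [hk]; linarith
    have hr1 : τ - (k:ℝ) < 1 := by
      have := Int.lt_floor_add_one τ
      simp only [hk]; linarith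
    have hg' : iota (g - k • p) = (τ - k) • iota p := by
      rw [iota_sub, iota_zsmul, hgp, ← sub_smul]
    by_cases hrz : τ - (k:ℝ) = 0
    · refine ⟨k, hk1, ?_⟩
      have : iota (g - k • p) = 0 := by rw [hg', hrz, zero_smul]
      have := iota_eq_zero this
      have := sub_eq_zero.mp this
      exact this
    · exfalso
      have hrpos : 0 < τ - (k:ℝ) := lt_of_le_of_ne hr0 (Ne.symm hrz)
      have hray' : Ray (g - k • p) := by
        refine ⟨(τ - k) * tp, by positivity, ?_⟩
        rw [hg', hpe, smul_smul]
      have h1 := hmin _ hray'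
      have h2 := (Nat.cast_le (α := ℝ)).mpr h1
      rw [Nat.cast_natAbs, Nat.cast_natAbs] at h2
      have h3 : (((g - k • p) i : ℤ) : ℝ) = (τ - k) * (p i : ℝ) := by
        have h4 : (g - k • p) i = g i - k * p i := by
          simp [Pi.sub_apply, Pi.smul_apply, smul_eq_mul]
        rw [h4]
        push_cast
        rw [hcoord i]
        ring
      push_cast at h2
      rw [h3, abs_mul, abs_of_pos hrpos] at h2
      nlinarith
  -- p is in the cone, hence has a Hilbert representation
  have hpcone : iota p ∈ intCone H := by
    rw [hpe]
    exact smul_mem_intCone (le_of_lt htp) (mem_intCone_of_mem heH)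
  obtain ⟨c, hc⟩ := hIGSC p hpcone
  -- each summand lies on the ray
  have hterms := sum_ray hext H (fun h => (c h : ℝ) • iota h)
    (fun h hh => smul_mem_intCone (by positivity) (mem_intCone_of_mem hh))
    ⟨tp, by rw [← iota_sum_nsmul H c (fun h => h), ← hc, hpe]⟩
  -- the multiplier function
  set K : (Fin n → ℤ) → ℤ := fun h => if hR : Ray h then (ray_step h hR).choose else 0
    with hK
  have hKspec : ∀ h, Ray h → 1 ≤ K h ∧ h = K h • p := by
    intro h hR
    rw [hK]
    simp only [dif_pos hR]
    exact ⟨(ray_step h hR).choose_spec.1, (ray_step h hR).choose_spec.2⟩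
  set F : Finset (Fin n → ℤ) := H.filter (fun h => c h ≠ 0 ∧ h ≠ 0) with hF
  have hFray : ∀ h ∈ F, Ray h := by
    intro h hh
    rw [hF, Finset.mem_filter] at hh
    obtain ⟨hhH, hc0, hh0⟩ := hh
    obtain ⟨α, hα0, hα⟩ := hterms h hhH
    have hcast : ((c h : ℝ)) ≠ 0 := Nat.cast_ne_zero.mpr hc0
    have hαne : α ≠ 0 := by
      intro h0
      rw [h0, zero_smul] at hα
      rcases smul_eq_zero.mp hα with h1 | h2
      · exact hcast h1
      · exact hh0 (iota_eq_zero h2)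
    refine ⟨α / (c h : ℝ), by positivity, ?_⟩
    have h5 := congrArg (fun v => ((c h : ℝ))⁻¹ • v) hα
    rw [inv_smul_smul₀ hcast] at h5
    rw [h5, smul_smul]
    congr 1
    field_simp
  have hKge : ∀ h ∈ F, 1 ≤ K h ∧ h = K h • p := fun h hh => hKspec h (hFray h hh)
  have hpF : p = ∑ h ∈ F, c h • h := by
    rw [hc, hF]
    refine (Finset.sum_filter_of_ne ?_).symm
    intro x _ hne
    constructor
    · intro h0; exact hne (by rw [h0, zero_smul])
    · intro h0; exact hne (by rw [h0, smul_zero])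
  set M : ℤ := ∑ h ∈ F, (c h : ℤ) * K h with hM
  have hpM : p = M • p := by
    have h6 : ∑ h ∈ F, c h • h = ∑ h ∈ F, ((c h : ℤ) * K h) • p :=
      Finset.sum_congr rfl fun h hh => by
        rw [mul_smul, ← (hKge h hh).2, natCast_zsmul]
    rw [hM, Finset.sum_smul, ← h6, ← hpF]
  have hM1 : M = 1 := by
    obtain ⟨j, hj⟩ : ∃ j, p j ≠ 0 := by
      by_contra hcon
      push_neg at hcon
      exact hpne (funext hcon)
    have h7 := congrFun hpM j
    simp only [Pi.smul_apply, smul_eq_mul] at h7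
    have h8 : (M - 1) * p j = 0 := by linarith
    rcases mul_eq_zero.mp h8 with h9 | h9
    · omega
    · exact absurd h9 hj
  have hterm1 : ∀ h ∈ F, (1:ℤ) ≤ (c h : ℤ) * K h := by
    intro h hh
    have h1 := (hKge h hh).1
    have hc0 : c h ≠ 0 := (Finset.mem_filter.mp (hF ▸ hh)).2.1
    have h2 : (1:ℤ) ≤ (c h : ℤ) := by exact_mod_cast Nat.one_le_iff_ne_zero.mpr hc0
    nlinarith
  have hFne : F.Nonempty := by
    rw [Finset.nonempty_iff_ne_empty]
    intro hcon
    rw [hM, hcon, Finset.sum_empty] at hM1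
    exact absurd hM1 (by norm_num)
  have hcard : F.card = 1 := by
    have hle : (F.card : ℤ) • (1:ℤ) ≤ M := Finset.card_nsmul_le_sum F _ 1 hterm1
    simp only [smul_eq_mul, mul_one] at hle
    have h1 := Finset.card_pos.mpr hFne
    omega
  obtain ⟨hstar, hFs⟩ := Finset.card_eq_one.mp hcard
  have hstarF : hstar ∈ F := by rw [hFs]; exact Finset.mem_singleton_self _
  have hMs : (c hstar : ℤ) * K hstar = 1 := by
    rw [hM, hFs, Finset.sum_singleton] at hM1
    exact hM1
  have hKs : K hstar = 1 := by
    have h1 := (hKge hstar hstarF).1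
    have hc0 : c hstar ≠ 0 := (Finset.mem_filter.mp (hF ▸ hstarF)).2.1
    have h2 : (1:ℤ) ≤ (c hstar : ℤ) := by exact_mod_cast Nat.one_le_iff_ne_zero.mpr hc0
    nlinarith
  have hpH : p ∈ H := by
    have h1 := (hKge hstar hstarF).2
    rw [hKs, one_smul] at h1
    have h2 : hstar ∈ H := (Finset.mem_filter.mp (hF ▸ hstarF)).1
    rwa [h1] at h2
  refine ⟨p, hpH, ⟨tp, htp, hpe⟩, ?_⟩
  rintro g ⟨t, hgt⟩
  rcases lt_trichotomy t 0 with htn | htz | htpos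
  · have hray : Ray (-g) := by
      refine ⟨(-t) * tp, mul_pos (neg_pos.mpr htn) htp, ?_⟩
      rw [iota_neg, hgt, hpe, smul_smul, ← neg_smul]
      congr 1
      ring
    obtain ⟨k, _, hk⟩ := ray_step _ hray
    exact ⟨-k, by rw [neg_smul, ← hk, neg_neg]⟩
  · refine ⟨0, ?_⟩
    rw [zero_smul]
    apply iota_eq_zero
    rw [hgt, htz, zero_smul]
  · have hray : Ray g := by
      refine ⟨t * tp, by positivity, ?_⟩
      rw [hgt, hpe, smul_smul]
    obtain ⟨k, _, hk⟩ := ray_step _ hray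
    exact ⟨k, hk⟩

lemma exists_fZ {p : Fin n → ℤ} (hpne : p ≠ 0)
    (hP1 : ∀ g : Fin n → ℤ, (∃ t : ℝ, iota g = t • iota p) → ∃ k : ℤ, g = k • p) :
    ∃ a : Fin n → ℤ, ∑ j, a j * p j = 1 := by
  classical
  set I : Ideal ℤ := Ideal.span (Set.range p) with hI
  obtain ⟨g, hg⟩ : ∃ g : ℤ, I = Ideal.span {g} :=
    (IsPrincipalIdealRing.principal I).principal
  have hpj : ∀ j, g ∣ p j := by
    intro j
    have : p j ∈ I := Ideal.subset_span ⟨j, rfl⟩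
    rwa [hg, Ideal.mem_span_singleton] at this
  obtain ⟨j0, hj0⟩ : ∃ j, p j ≠ 0 := by
    by_contra hcon
    push_neg at hcon
    exact hpne (funext hcon)
  have hgne : g ≠ 0 := by
    intro h0
    obtain ⟨d, hd⟩ := hpj j0
    rw [h0, zero_mul] at hd
    exact hj0 hd
  set q : Fin n → ℤ := fun j => p j / g with hq
  have hpq : p = g • q := by
    funext j
    simp only [hq, Pi.smul_apply, smul_eq_mul]
    exact (Int.mul_ediv_cancel' (hpj j)).symm
  have hiq : iota q = ((g:ℝ))⁻¹ • iota p := by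
    have h1 : iota p = (g:ℝ) • iota q := by
      conv_lhs => rw [hpq]
      rw [iota_zsmul]
    rw [h1, smul_smul, inv_mul_cancel₀ (by exact_mod_cast hgne), one_smul]
  obtain ⟨k, hk⟩ := hP1 q ⟨((g:ℝ))⁻¹, hiq⟩
  have hgk : g * k = 1 := by
    have h1 : p = (g * k) • p := by
      rw [mul_smul, ← hk, ← hpq]
    have h2 := congrFun h1 j0
    simp only [Pi.smul_apply, smul_eq_mul] at h2
    have h3 : (g * k - 1) * p j0 = 0 := by linarith
    rcases mul_eq_zero.mp h3 with h4 | h4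
    · omega
    · exact absurd h4 hj0
  have hgI : g ∈ I := by rw [hg]; exact Ideal.subset_span rfl
  have hone : (1:ℤ) ∈ I := by
    rw [← hgk, mul_comm]
    exact I.mul_mem_left k hgI
  rw [hI] at hone
  obtain ⟨a, ha⟩ := (Submodule.mem_span_range_iff_exists_fun ℤ).mp hone
  exact ⟨a, by simpa [smul_eq_mul] using ha⟩

def Concl (H : Finset (Fin n → ℤ)) : Prop :=
  ∃ B ⊆ H,
    LinearIndependent ℤ (fun b : {v // v ∈ B} => (b : Fin n → ℤ)) ∧
    ∀ x : Fin n → ℤ, iota x ∈ Submodule.span ℝ (iota '' ↑H) →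
      ∃ c : (Fin n → ℤ) → ℤ, x = ∑ h ∈ B, c h • h

lemma trivial_case (H : Finset (Fin n → ℤ)) (hzero : ∀ h ∈ H, h = (0 : Fin n → ℤ)) :
    Concl H := by
  classical
  have hempty : IsEmpty {v // v ∈ (∅ : Finset (Fin n → ℤ))} :=
    ⟨fun b => (Finset.notMem_empty _ b.2)⟩
  refine ⟨∅, Finset.empty_subset H, linearIndependent_empty_type, ?_⟩
  intro x hx
  have hsub : iota '' (↑H : Set (Fin n → ℤ)) ⊆ {(0 : Fin n → ℝ)} := by
    rintro _ ⟨h, hh, rfl⟩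
    rw [hzero h (Finset.mem_coe.mp hh), iota_zero]
    rfl
  have hspan : Submodule.span ℝ (iota '' (↑H : Set (Fin n → ℤ))) ≤ ⊥ := by
    rw [← Submodule.span_zero_singleton (R := ℝ) (M := Fin n → ℝ)]
    exact Submodule.span_mono hsub
  have hx0 : iota x = 0 := (Submodule.mem_bot ℝ).mp (hspan hx)
  exact ⟨0, by rw [Finset.sum_empty]; exact iota_eq_zero hx0⟩

lemma key (d : ℕ) : ∀ H : Finset (Fin n → ℤ),
    Module.finrank ℝ (Submodule.span ℝ (iota '' (↑H : Set (Fin n → ℤ)))) ≤ d →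
    (∀ x : Fin n → ℤ, (fun i => (x i : ℝ)) ∈ intCone H →
      ∃ c : (Fin n → ℤ) → ℕ, x = ∑ h ∈ H, c h • h) →
    (∀ v : Fin n → ℝ, v ∈ intCone H → -v ∈ intCone H → v = 0) →
    Concl H := by
  induction d with
  | zero =>
      intro H hrk hIG hpt
      apply trivial_case
      intro h hh
      have h0 : Module.finrank ℝ (Submodule.span ℝ (iota '' (↑H : Set (Fin n → ℤ)))) = 0 :=
        Nat.le_zero.mp hrk
      have hbot : Submodule.span ℝ (iota '' (↑H : Set (Fin n → ℤ))) = ⊥ :=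
        Submodule.finrank_eq_zero.mp h0
      have : iota h ∈ Submodule.span ℝ (iota '' (↑H : Set (Fin n → ℤ))) :=
        Submodule.subset_span ⟨h, Finset.mem_coe.mpr hh, rfl⟩
      rw [hbot, Submodule.mem_bot] at this
      exact iota_eq_zero this
  | succ d IH =>
      intro H hrk hIG hpt
      by_cases hz : ∀ h ∈ H, h = (0 : Fin n → ℤ)
      · exact trivial_case H hz
      push_neg at hz
      obtain ⟨h0, h0H, h0ne⟩ := hz
      have h0ne' : iota h0 ≠ 0 := fun hc => h0ne (iota_eq_zero hc)
      obtain ⟨e, heH, hene, hext⟩ := exists_extreme hpt h0H h0ne'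
      obtain ⟨p, hpH, ⟨tp, htp, hpe⟩, hP1⟩ := exists_prim hIG heH hene hext
      have hiotapne : iota p ≠ 0 := by
        rw [hpe]; exact smul_ne_zero (ne_of_gt htp) hene
      have hpne : p ≠ 0 := fun hc => hiotapne (by rw [hc]; exact iota_zero)
      obtain ⟨a, ha⟩ := exists_fZ hpne hP1
      -- the integer and real functionals
      set fZ : (Fin n → ℤ) →ₗ[ℤ] ℤ :=
        { toFun := fun x => ∑ j, a j * x j
          map_add' := fun x y => by
            simp only [Pi.add_apply, mul_add]
            rw [Finset.sum_add_distrib]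
          map_smul' := fun m x => by
            simp only [Pi.smul_apply, smul_eq_mul, RingHom.id_apply]
            rw [Finset.mul_sum]
            exact Finset.sum_congr rfl fun j _ => by ring } with hfZdef
      have hfZapp : ∀ x, fZ x = ∑ j, a j * x j := fun _ => rfl
      have hfp : fZ p = 1 := ha
      set fR : (Fin n → ℝ) →ₗ[ℝ] ℝ :=
        { toFun := fun v => ∑ j, (a j : ℝ) * v j
          map_add' := fun x y => by
            simp only [Pi.add_apply, mul_add]
            rw [Finset.sum_add_distrib]
          map_smul' := fun m x => by
            simp only [Pi.smul_apply, smul_eq_mul, RingHom.id_apply]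
            rw [Finset.mul_sum]
            exact Finset.sum_congr rfl fun j _ => by ring } with hfRdef
      have hfR : ∀ x : Fin n → ℤ, fR (iota x) = (fZ x : ℝ) := by
        intro x
        show ∑ j, (a j : ℝ) * (x j : ℝ) = ((∑ j, a j * x j : ℤ) : ℝ)
        push_cast
        rfl
      -- the projections
      set pZ : (Fin n → ℤ) →ₗ[ℤ] (Fin n → ℤ) := LinearMap.id - fZ.smulRight p with hpZdef
      have hpZapp : ∀ x, pZ x = x - fZ x • p := fun x => rfl
      have hcomm : ∀ x, iota (pZ x) = iota x - (fZ x : ℝ) • iota p := by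
        intro x
        rw [hpZapp, iota_sub, iota_zsmul]
      have hpzp : pZ p = 0 := by rw [hpZapp, hfp, one_smul, sub_self]
      have hfpz : ∀ x, fZ (pZ x) = 0 := by
        intro x
        rw [hpZapp, map_sub, map_smul, hfp, smul_eq_mul, mul_one, sub_self]
      set H' : Finset (Fin n → ℤ) := H.image pZ with hH'
      -- preimage choice
      have hφex : ∀ g ∈ H', ∃ h, h ∈ H ∧ pZ h = g := by
        intro g hg
        obtain ⟨h, hh, hph⟩ := Finset.mem_image.mp hg
        exact ⟨h, hh, hph⟩
      set φ : (Fin n → ℤ) → (Fin n → ℤ) :=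
        fun g => if hg : g ∈ H' then (hφex g hg).choose else 0 with hφdef
      have hφH : ∀ g ∈ H', φ g ∈ H := by
        intro g hg
        rw [hφdef]; simp only [dif_pos hg]; exact (hφex g hg).choose_spec.1
      have hφp : ∀ g ∈ H', pZ (φ g) = g := by
        intro g hg
        rw [hφdef]; simp only [dif_pos hg]; exact (hφex g hg).choose_spec.2
      have hfZ0 : ∀ g ∈ H', fZ g = 0 := by
        intro g hg
        rw [← hφp g hg, hfpz]
      have hfR0 : ∀ g ∈ H', fR (iota g) = 0 := by
        intro g hg
        rw [hfR, hfZ0 g hg, Int.cast_zero]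
      have hiotaH' : ∀ g ∈ H', iota g = iota (φ g) - (fZ (φ g) : ℝ) • iota p := by
        intro g hg
        conv_lhs => rw [← hφp g hg]
        rw [hcomm]
      -- f vanishes on the cone of H'
      have hfRcone : ∀ v ∈ intCone H', fR v = 0 := by
        rintro v ⟨c, hc, rfl⟩
        rw [map_sum]
        refine Finset.sum_eq_zero fun g hg => ?_
        rw [map_smul, smul_eq_mul]
        have : fR (fun i => ((g i : ℝ))) = 0 := hfR0 g hg
        rw [this, mul_zero]
      -- decomposition of cone elements
      have hdecomp : ∀ v ∈ intCone H', ∃ y ∈ intCone H, ∃ s : ℝ, v = y - s • iota p := by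
        rintro v ⟨c, hc, rfl⟩
        refine ⟨∑ g ∈ H', c g • iota (φ g),
          sum_mem_intCone H' _ (fun g hg =>
            smul_mem_intCone (hc g) (mem_intCone_of_mem (hφH g hg))),
          ∑ g ∈ H', c g * (fZ (φ g) : ℝ), ?_⟩
        rw [Finset.sum_smul, ← Finset.sum_sub_distrib]
        refine Finset.sum_congr rfl fun g hg => ?_
        show c g • iota g = c g • iota (φ g) - (c g * (fZ (φ g) : ℝ)) • iota p
        rw [hiotaH' g hg, smul_sub, smul_smul]
      -- Claim 1: hIGSC for H'
      have hIG' : ∀ x : Fin n → ℤ, (fun i => (x i : ℝ)) ∈ intCone H' →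
          ∃ c : (Fin n → ℤ) → ℕ, x = ∑ h ∈ H', c h • h := by
        intro x hx
        have hfx : fZ x = 0 := by
          have h1 : fR (iota x) = 0 := hfRcone _ hx
          rw [hfR] at h1
          exact_mod_cast h1
        obtain ⟨y, hy, s, hxy⟩ := hdecomp _ hx
        set k : ℤ := ⌈s⌉ with hkc
        have h2 : (fun i => (((x + k • p) i : ℤ) : ℝ)) ∈ intCone H := by
          show iota (x + k • p) ∈ intCone H
          have h3 : iota (x + k • p) = y + ((k : ℝ) - s) • iota p := by
            rw [iota_add, iota_zsmul]
            have h4 : iota x = y - s • iota p := hxy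
            rw [h4, sub_smul]
            abel
          rw [h3]
          exact add_mem_intCone hy
            (smul_mem_intCone (by linarith [Int.le_ceil s]) (mem_intCone_of_mem hpH))
        obtain ⟨c, hc⟩ := hIG _ h2
        have h5 : pZ (x + k • p) = x := by
          rw [map_add, map_smul, hpzp, smul_zero, add_zero, hpZapp, hfx, zero_smul,
            sub_zero]
        have h6 : x = ∑ h ∈ H, c h • pZ h := by
          rw [← h5, hc, map_sum]
          exact Finset.sum_congr rfl fun h _ => map_nsmul pZ _ _
        refine ⟨fun g => ∑ h ∈ H.filter (fun h => pZ h = g), c h, ?_⟩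
        rw [hH']
        rw [h6]
        refine (Finset.sum_image' _ (fun h hh => ?_)).symm
        rw [Finset.sum_smul]
        exact Finset.sum_congr rfl fun j hj => by rw [(Finset.mem_filter.mp hj).2]
      -- some values of fR
      have hfRp : fR (iota p) = 1 := by rw [hfR, hfp, Int.cast_one]
      have hfRe : fR (iota e) = tp⁻¹ := by
        have h1 : fR (iota p) = tp * fR (iota e) := by
          rw [hpe, map_smul, smul_eq_mul]
        rw [hfRp] at h1
        field_simp
        linarith
      -- Claim 2: pointedness for H'
      have hpt' : ∀ v : Fin n → ℝ, v ∈ intCone H' → -v ∈ intCone H' → v = 0 := by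
        intro v hv hv'
        obtain ⟨y, hy, s, hys⟩ := hdecomp v hv
        obtain ⟨z, hz, s', hzs⟩ := hdecomp _ hv'
        have hsum : y + z = ((s + s') * tp) • iota e := by
          have h1 : (y - s • iota p) + (z - s' • iota p) = 0 := by
            rw [← hys, ← hzs]; exact add_neg_cancel v
          have h3 : y + z - (s • iota p + s' • iota p)
              = (y - s • iota p) + (z - s' • iota p) := by abel
          rw [h1] at h3
          have h2 : y + z = s • iota p + s' • iota p := sub_eq_zero.mp h3
          rw [h2, hpe, smul_smul, smul_smul, ← add_smul]
          congr 1
          ring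
        obtain ⟨α, hα0, hαy⟩ := hext y z hy hz ⟨(s + s') * tp, hsum⟩
        have hfv : fR v = 0 := hfRcone v hv
        have hveq : v = (α - s * tp) • iota e := by
          rw [hys, hαy, hpe, smul_smul, sub_smul]
        rw [hveq, map_smul, smul_eq_mul, hfRe] at hfv
        have h7 : α - s * tp = 0 := by
          rcases mul_eq_zero.mp hfv with h | h
          · exact h
          · exact absurd h (inv_ne_zero (ne_of_gt htp))
        rw [hveq, h7, zero_smul]
      -- Claim 3: rank drops
      set W : Submodule ℝ (Fin n → ℝ) := Submodule.span ℝ (iota '' (↑H : Set (Fin n → ℤ)))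
        with hWdef
      set W' : Submodule ℝ (Fin n → ℝ) := Submodule.span ℝ (iota '' (↑H' : Set (Fin n → ℤ)))
        with hW'def
      have hpW : iota p ∈ W := Submodule.subset_span ⟨p, Finset.mem_coe.mpr hpH, rfl⟩
      have hWle1 : W' ≤ W := by
        rw [hW'def]
        apply Submodule.span_le.mpr
        rintro _ ⟨g, hg, rfl⟩
        have hgH' : g ∈ H' := Finset.mem_coe.mp hg
        rw [hiotaH' g hgH']
        exact sub_mem
          (Submodule.subset_span ⟨φ g, Finset.mem_coe.mpr (hφH g hgH'), rfl⟩)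
          (Submodule.smul_mem _ _ hpW)
      have hWle2 : W ≤ W' ⊔ Submodule.span ℝ {iota p} := by
        rw [hWdef]
        apply Submodule.span_le.mpr
        rintro _ ⟨h, hh, rfl⟩
        have h1 : iota h = iota (pZ h) + (fZ h : ℝ) • iota p := by
          rw [hcomm]
          abel
        rw [h1]
        refine add_mem (Submodule.mem_sup_left ?_) (Submodule.mem_sup_right
          (Submodule.smul_mem _ _ (Submodule.subset_span rfl)))
        exact Submodule.subset_span
          ⟨pZ h, Finset.mem_coe.mpr (Finset.mem_image_of_mem pZ (Finset.mem_coe.mp hh)), rfl⟩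
      have hWeq : W = W' ⊔ Submodule.span ℝ {iota p} :=
        le_antisymm hWle2 (sup_le hWle1 (Submodule.span_le.mpr
          (Set.singleton_subset_iff.mpr hpW)))
      have hker : W' ≤ LinearMap.ker fR := by
        rw [hW'def]
        apply Submodule.span_le.mpr
        rintro _ ⟨g, hg, rfl⟩
        exact LinearMap.mem_ker.mpr (hfR0 g (Finset.mem_coe.mp hg))
      have hinf : W' ⊓ Submodule.span ℝ {iota p} = ⊥ := by
        rw [eq_bot_iff]
        rintro v ⟨hv1, hv2⟩
        obtain ⟨t, rfl⟩ := Submodule.mem_span_singleton.mp hv2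
        have h1 : fR (t • iota p) = 0 := LinearMap.mem_ker.mp (hker hv1)
        rw [map_smul, smul_eq_mul, hfRp, mul_one] at h1
        rw [h1, zero_smul]
        exact Submodule.zero_mem ⊥
      have hrk' : Module.finrank ℝ
          (Submodule.span ℝ (iota '' (↑H' : Set (Fin n → ℤ)))) ≤ d := by
        have h1 := Submodule.finrank_sup_add_finrank_inf_eq W' (Submodule.span ℝ {iota p})
        rw [hinf, finrank_bot, ← hWeq, finrank_span_singleton hiotapne] at h1
        rw [← hW'def]
        omega
      -- apply the induction hypothesis
      obtain ⟨B', hB'sub, hB'lin, hB'span⟩ := IH H' hrk' hIG' hpt'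
      -- assembly
      have h0B' : (0 : Fin n → ℤ) ∉ B' := fun h0m => hB'lin.ne_zero ⟨0, h0m⟩ rfl
      have hφpne : ∀ g ∈ B', φ g ≠ p := by
        intro g hg hc
        apply h0B'
        have h1 := hφp g (hB'sub hg)
        rw [hc, hpzp] at h1
        rwa [← h1] at hg
      set B : Finset (Fin n → ℤ) := insert p (B'.image φ) with hB
      have hpnotB : p ∉ B'.image φ := by
        intro hc
        obtain ⟨g, hg, hgp⟩ := Finset.mem_image.mp hc
        exact hφpne g hg hgp
      have hφinj : ∀ x ∈ B', ∀ y ∈ B', φ x = φ y → x = y := by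
        intro x hx y hy hxy
        rw [← hφp x (hB'sub hx), ← hφp y (hB'sub hy), hxy]
      have hBH : B ⊆ H := by
        rw [hB]
        apply Finset.insert_subset hpH
        intro v hv
        obtain ⟨g, hg, rfl⟩ := Finset.mem_image.mp hv
        exact hφH g (hB'sub hg)
      -- linear independence of B
      have hlinB : LinearIndependent ℤ (fun b : {v // v ∈ B} => (b : Fin n → ℤ)) := by
        rw [Fintype.linearIndependent_iff]
        intro gc hgc
        set G : (Fin n → ℤ) → ℤ := fun v => if hv : v ∈ B then gc ⟨v, hv⟩ else 0 with hG
        have hGB : ∀ b : {v // v ∈ B}, gc b = G ↑b := fun b => by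
          rw [hG]; simp only [dif_pos b.2]
        have hsum : ∑ v ∈ B, G v • v = 0 := by
          rw [← Finset.sum_coe_sort B (fun v => G v • v), ← hgc]
          exact Finset.sum_congr rfl fun b _ => by rw [hGB b]
        rw [hB, Finset.sum_insert hpnotB, Finset.sum_image hφinj] at hsum
        have h2 : ∑ g ∈ B', G (φ g) • g = 0 := by
          have h3 := congrArg pZ hsum
          rw [map_zero, map_add, map_smul, hpzp, smul_zero, zero_add, map_sum] at h3
          rw [← h3]
          refine Finset.sum_congr rfl fun g hg => ?_
          rw [map_smul, hφp g (hB'sub hg)]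
        have h4 : ∀ g ∈ B', G (φ g) = 0 := by
          have h5 := Fintype.linearIndependent_iff.mp hB'lin
            (fun b : {v // v ∈ B'} => G (φ ↑b)) ?_
          · intro g hg; exact h5 ⟨g, hg⟩
          · rw [Finset.sum_coe_sort B' (fun g => G (φ g) • g)]
            exact h2
        have h6 : G p • p = 0 := by
          rw [Finset.sum_eq_zero (fun g hg => by rw [h4 g hg, zero_smul]), add_zero] at hsum
          exact hsum
        have h7 : G p = 0 := by
          rcases smul_eq_zero.mp h6 with h | h
          · exact h
          · exact absurd h hpne
        intro b
        rw [hGB b]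
        obtain ⟨bv, hbv⟩ := b
        show G bv = 0
        rw [hB] at hbv
        rcases Finset.mem_insert.mp hbv with hb | hb
        · rw [hb]; exact h7
        · obtain ⟨g, hg, hgb⟩ := Finset.mem_image.mp hb
          rw [← hgb]
          exact h4 g hg
      refine ⟨B, hBH, hlinB, ?_⟩
      -- the spanning property
      intro x hx
      have hx' : iota x ∈ W' ⊔ Submodule.span ℝ {iota p} := by
        rw [← hWeq]
        exact hx
      obtain ⟨v, hv, w, hw, hvw⟩ := Submodule.mem_sup.mp hx'
      obtain ⟨t, rfl⟩ := Submodule.mem_span_singleton.mp hw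
      have ht : t = (fZ x : ℝ) := by
        have h1 : fR (iota x) = t := by
          rw [← hvw, map_add, map_smul, smul_eq_mul, hfRp, mul_one,
            LinearMap.mem_ker.mp (hker hv), zero_add]
        rw [hfR] at h1
        exact h1.symm
      have h2 : iota (pZ x) ∈ W' := by
        rw [hcomm]
        have h3 : iota x - (fZ x : ℝ) • iota p = v := by
          rw [← hvw, ht]
          abel
        rw [h3]
        exact hv
      obtain ⟨cB, hcB⟩ := hB'span (pZ x) h2
      refine ⟨fun v => if v = p then fZ x - ∑ g ∈ B', cB g * fZ (φ g) else cB (pZ v), ?_⟩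
      rw [hB, Finset.sum_insert hpnotB, Finset.sum_image hφinj]
      beta_reduce
      rw [if_pos rfl]
      have hterm : ∀ g ∈ B',
          (if φ g = p then fZ x - ∑ g ∈ B', cB g * fZ (φ g) else cB (pZ (φ g))) • φ g
            = cB g • φ g := by
        intro g hg
        rw [if_neg (hφpne g hg), hφp g (hB'sub hg)]
      rw [Finset.sum_congr rfl hterm]
      have hsplit : ∑ g ∈ B', cB g • g
          = ∑ g ∈ B', (cB g • φ g - (cB g * fZ (φ g)) • p) := by
        refine Finset.sum_congr rfl fun g hg => ?_
        have h8 : pZ (φ g) = φ g - fZ (φ g) • p := hpZapp (φ g)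
        rw [mul_smul, ← smul_sub, ← h8, hφp g (hB'sub hg)]
      have hxp : x = pZ x + fZ x • p := by
        rw [hpZapp]
        abel
      have h9 : ∑ g ∈ B', cB g • φ g
          = pZ x + (∑ g ∈ B', cB g * fZ (φ g)) • p := by
        have h10 : pZ x
            = (∑ g ∈ B', cB g • φ g) - (∑ g ∈ B', cB g * fZ (φ g)) • p := by
          rw [hcB, hsplit, Finset.sum_sub_distrib, Finset.sum_smul]
        rw [h10]
        abel
      rw [h9, sub_smul]
      conv_lhs => rw [hxp]
      abel

end IGS

theorem stmt0 {n : ℕ} (H : Finset (Fin n → ℤ))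
    (hIGSC : ∀ x : Fin n → ℤ, (fun i => (x i : ℝ)) ∈ intCone H →
      ∃ c : (Fin n → ℤ) → ℕ, x = ∑ h ∈ H, c h • h)
    (hpointed : ∀ v : Fin n → ℝ, v ∈ intCone H → -v ∈ intCone H → v = 0) :
    ∃ B ⊆ H,
      LinearIndependent ℤ (fun b : {v // v ∈ B} => (b : Fin n → ℤ)) ∧
      ∀ x : Fin n → ℤ,
        (fun i => (x i : ℝ)) ∈
          Submodule.span ℝ ((fun (v : Fin n → ℤ) (i : Fin n) => (v i : ℝ)) '' ↑H) →
        ∃ c : (Fin n → ℤ) → ℤ, x = ∑ h ∈ B, c h • h := by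
  obtain ⟨B, hBH, hlin, hsp⟩ := IGS.key
    (Module.finrank ℝ (Submodule.span ℝ (IGS.iota '' (↑H : Set (Fin n → ℤ))))) H
    le_rfl hIGSC hpointed
  exact ⟨B, hBH, hlin, fun x hx => hsp x hx⟩
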